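/- For all nonnegative integers J and J', the sum C_BF(J,J') := Σ_{K=0}^{J'} (−1)^{J'−K} · (J+J'−K)! · (J+2J'−2K+1) / (J! · (J'−K)! · K! · (J+2J'−K+1)!) satisfies C_BF(J,J') = (if J' = 0 then 1/J! else 0). -/

import Mathlib

open Nat

lemma key_id (J p n : ℕ) (hn : n ≤ p) :
    ((p+1).choose (n+1) : ℚ) * ((J:ℚ) + 2*n + 3)
      = (p.choose (n+1) : ℚ) * ((J:ℚ) + n + 2) + (p.choose n : ℚ) * ((J:ℚ) + p + n + 3) := by
  have pascal : ((p+1).choose (n+1) : ℚ) = (p.choose n : ℚ) + (p.choose (n+1) : ℚ) := by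
    rw [Nat.choose_succ_succ]; push_cast; ring
  have h2 : (p.choose (n+1) : ℚ) * ((n:ℚ)+1) = (p.choose n : ℚ) * ((p:ℚ) - n) := by
    have h := Nat.choose_succ_right_eq p n
    have hc : ((p - n : ℕ) : ℚ) = (p:ℚ) - n := by
      rw [Nat.cast_sub hn]
    calc (p.choose (n+1) : ℚ) * ((n:ℚ)+1) = ((p.choose (n+1) * (n+1) : ℕ) : ℚ) := by push_cast; ring
      _ = ((p.choose n * (p - n) : ℕ) : ℚ) := by rw [h]
      _ = (p.choose n : ℚ) * ((p:ℚ) - n) := by push_cast [hc]; ring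
  linear_combination ((J:ℚ)+2*n+3) * pascal + h2

lemma step (J p n : ℕ) (hn : n ≤ p) :
    (-1:ℚ)^(n+1) * (((J+n+1).factorial : ℚ)) * (((J+2*n+3 : ℕ)):ℚ) /
      ((J.factorial :ℚ) * ((p-n).factorial :ℚ) * ((n+1).factorial :ℚ) * ((J+p+n+3).factorial :ℚ))
  = (-1:ℚ)^(n+1) * (p.choose (n+1):ℚ) * ((J+n+2).factorial :ℚ) /
      ((J.factorial :ℚ) * ((p+1).factorial :ℚ) * ((J+p+n+3).factorial :ℚ))
    - (-1:ℚ)^n * (p.choose n :ℚ) * ((J+n+1).factorial :ℚ) /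
      ((J.factorial :ℚ) * ((p+1).factorial :ℚ) * ((J+p+n+2).factorial :ℚ)) := by
  have e1 : (J+n+2).factorial = (J+n+2) * (J+n+1).factorial := by
    rw [show J+n+2 = (J+n+1)+1 from rfl, Nat.factorial_succ]
  have e2 : (J+p+n+3).factorial = (J+p+n+3) * (J+p+n+2).factorial := by
    rw [show J+p+n+3 = (J+p+n+2)+1 from rfl, Nat.factorial_succ]
  have e3 : (p+1).factorial = (p+1).choose (n+1) * (n+1).factorial * (p-n).factorial := by
    have := Nat.choose_mul_factorial_mul_factorial (Nat.succ_le_succ hn)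
    rw [show p+1-(n+1) = p-n from by omega] at this
    exact this.symm
  have hch : ((p+1).choose (n+1) : ℚ) ≠ 0 := by
    exact_mod_cast (Nat.choose_pos (Nat.succ_le_succ hn)).ne'
  have f0 : ∀ m : ℕ, ((m.factorial : ℚ)) ≠ 0 := fun m => by
    exact_mod_cast m.factorial_ne_zero
  rw [e1, e2, e3]
  push_cast
  field_simp
  linear_combination ((-1:ℚ)^(n+1)) * key_id J p n hn

def Gaux (J p : ℕ) : ℕ → ℚ
  | 0 => 0
  | (n+1) => (-1)^n * (p.choose n : ℚ) * ((J+n+1).factorial : ℚ) /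
      ((J.factorial : ℚ) * ((p+1).factorial : ℚ) * ((J+p+n+2).factorial : ℚ))

open Nat in
theorem stmt_4 (J J' : ℕ) :
    (∑ K ∈ Finset.range (J' + 1),
      (-1 : ℚ) ^ (J' - K) * (Nat.factorial (J + J' - K) : ℚ)
          * ((J + 2 * J' - 2 * K + 1 : ℕ) : ℚ) /
        ((Nat.factorial J : ℚ) * (Nat.factorial (J' - K) : ℚ) * (Nat.factorial K : ℚ)
          * (Nat.factorial (J + 2 * J' - K + 1) : ℚ)))
    = if J' = 0 then 1 / (Nat.factorial J : ℚ) else 0 := by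
  have f0 : ∀ m : ℕ, ((m.factorial : ℚ)) ≠ 0 := fun m => by
    exact_mod_cast m.factorial_ne_zero
  rw [← Finset.sum_range_reflect]
  have hcg : ∀ K ∈ Finset.range (J' + 1),
      (-1 : ℚ) ^ (J' - (J' + 1 - 1 - K)) * (Nat.factorial (J + J' - (J' + 1 - 1 - K)) : ℚ)
          * ((J + 2 * J' - 2 * (J' + 1 - 1 - K) + 1 : ℕ) : ℚ) /
        ((Nat.factorial J : ℚ) * (Nat.factorial (J' - (J' + 1 - 1 - K)) : ℚ)
          * (Nat.factorial (J' + 1 - 1 - K) : ℚ)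
          * (Nat.factorial (J + 2 * J' - (J' + 1 - 1 - K) + 1) : ℚ))
      = (-1 : ℚ) ^ K * ((J + K).factorial : ℚ) * ((J + 2 * K + 1 : ℕ) : ℚ) /
        ((J.factorial : ℚ) * ((J' - K).factorial : ℚ) * (K.factorial : ℚ)
          * ((J + J' + K + 1).factorial : ℚ)) := by
    intro K hK
    simp only [Finset.mem_range] at hK
    have h1 : J' + 1 - 1 - K = J' - K := by omega
    have h2 : J' - (J' - K) = K := by omega
    have h3 : J + J' - (J' - K) = J + K := by omega
    have h4 : J + 2 * J' - 2 * (J' - K) + 1 = J + 2 * K + 1 := by omega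
    have h5 : J + 2 * J' - (J' - K) + 1 = J + J' + K + 1 := by omega
    rw [h1, h2, h3, h4, h5]
    ring
  rw [Finset.sum_congr rfl hcg]
  rcases J' with _ | p
  · simp only [if_pos rfl, Finset.sum_range_one]
    norm_num
    rw [Nat.factorial_succ]
    push_cast
    field_simp
  · simp only [Nat.succ_ne_zero, if_neg]
    have hstep : ∀ K ∈ Finset.range (p + 2),
        (-1 : ℚ) ^ K * ((J + K).factorial : ℚ) * ((J + 2 * K + 1 : ℕ) : ℚ) /
          ((J.factorial : ℚ) * ((p + 1 - K).factorial : ℚ) * (K.factorial : ℚ)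
            * ((J + (p + 1) + K + 1).factorial : ℚ))
        = Gaux J p (K + 1) - Gaux J p K := by
      intro K hK
      simp only [Finset.mem_range] at hK
      match K with
      | 0 =>
        simp only [Gaux]
        norm_num
        rw [show J + (p + 1) + 1 = J + p + 2 from by omega,
          show (J + 1).factorial = (J + 1) * J.factorial from Nat.factorial_succ J]
        push_cast
        ring
      | (n+1) =>
        have hn : n ≤ p := by omega
        have h1 : p + 1 - (n + 1) = p - n := by omega
        have h2 : J + (p + 1) + (n + 1) + 1 = J + p + n + 3 := by omega
        have h3 : J + 2 * (n + 1) + 1 = J + 2 * n + 3 := by omega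
        have h4 : J + (n + 1) = J + n + 1 := by omega
        have h5 : J + (n + 1) + 1 = J + n + 2 := by omega
        have h6 : J + p + (n + 1) + 2 = J + p + n + 3 := by omega
        have h7 : J + p + n + 2 = J + p + n + 2 := rfl
        simp only [Gaux, h1, h2, h3, h4, h5, h6]
        exact step J p n hn
    rw [Finset.sum_congr rfl hstep, Finset.sum_range_sub]
    simp [Gaux, Nat.choose_succ_self]
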